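/- Consider glucose–insulin dynamics on t ≥ 0 given by Ġ(t) = −S_G·G(t) − X(t)·(G(t) + G_b) + D(t), Ẋ(t) = −P₂·X(t) + P₃·I(t), İ(t) = −n·(I(t) + I_b) + u(t)/V, with patient parameters satisfying S_G ∈ [S̲_G, S̄_G], P₂ ∈ [P̲₂, P̄₂], P₃ ∈ [P̲₃, P̄₃], n ∈ [n̲, n̄] (all bounds positive) and meal disturbance 0 ≤ D(t) ≤ D̄. Let X̂, Î be differentiable estimate signals with |X(t) − X̂(t)| ≤ Δ_X, |I(t) − Î(t)| ≤ Δ_I, |Ẋ(t) − d/dt X̂(t)| ≤ Δ̇_X, |İ(t) − d/dt Î(t)| ≤ Δ̇_I for all t. Define the normalized glucose error e_G(t) = (G(t) − (Ḡ + G̲)/2)/((Ḡ − G̲)/2), the reference X_ref(t) = κ₁·Ψ(e_G(t)), the funnel ρ_X(t) = (p_X − q_X)e^{−μ_X t} + q_X, the normalized error e_X(t) = (X_ref(t) − X̂(t))/ρ_X(t), the reference I_ref(t) = κ₂·Ψ(e_X(t)), the funnel ρ_I(t) = (p_I − q_I)e^{−μ_I t} + q_I, the normalized error e_I(t) = (I_ref(t)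 − Î(t))/ρ_I(t), and the control input u(t) = ū·Ψ(e_I(t)). Suppose X_ref and I_ref are differentiable with |Ẋ_ref(t)| ≤ M_X and |İ_ref(t)| ≤ M_I for all t, the initial conditions satisfy |e_G(0)| < 1, |e_X(0)| < 1, |e_I(0)| < 1, the glucose bounds satisfy G̲ < 0 < Ḡ and G̲ + G_b > 0, and the feasibility conditions hold: (FC1a) (κ₁ − p_X − Δ_X)(Ḡ + G_b) > D̄; (FC1b) −S̲_G·G̲ > (p_X + Δ_X)(G̲ + G_b); (FC2a) P̲₃(κ₂ − p_I − Δ_I) − P̄₂(κ₁ − q_X + Δ_X) > M_X + μ_X(p_X − q_X) + Δ̇_X; (FC2b) P̲₂(q_X − Δ_X) − P̄₃(p_I + Δ_I) > M_X + μ_X(p_X − q_X) + Δ̇_X; (FC3a) ū/V − n̄(κ₂ − q_I + Δ_I + I_b) > M_I + μ_I(p_I − q_I) + Δ̇_I; (FC3b) n̲(q_I − Δ_I + I_b) > M_I + μ_I(p_I − q_I) + Δ̇_I. Then for all t ≥ 0: (i) G(t) ∈ [G̲, Ḡ], and (ii) u(t) ∈ [0, ū]. -/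

import Mathlib

open Set Filter Topology in
lemma barrier_lt {h h' : ℝ → ℝ}
    (hd : ∀ t ≥ (0:ℝ), HasDerivAt h (h' t) t)
    (h0 : h 0 < 0)
    (hpush : ∀ t ≥ (0:ℝ), h t = 0 → h' t < 0) :
    ∀ t ≥ (0:ℝ), h t < 0 := by
  intro t₀ ht₀
  by_contra hc
  push_neg at hc
  have hcont : ContinuousOn h (Set.Icc 0 t₀) := fun t ht =>
    ((hd t ht.1).continuousAt).continuousWithinAt
  set S : Set ℝ := Set.Icc 0 t₀ ∩ h ⁻¹' Set.Ici 0 with hSdef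
  have hSclosed : IsClosed S :=
    hcont.preimage_isClosed_of_isClosed isClosed_Icc isClosed_Ici
  have hSne : S.Nonempty := ⟨t₀, ⟨⟨ht₀, le_refl t₀⟩, hc⟩⟩
  have hSbdd : BddBelow S := ⟨0, fun x hx => hx.1.1⟩
  set s := sInf S with hs_def
  have hsS : s ∈ S := hSclosed.csInf_mem hSne hSbdd
  have hs0 : 0 ≤ s := hsS.1.1
  have hst : s ≤ t₀ := hsS.1.2
  have hspos : 0 < s := by
    rcases lt_or_eq_of_le hs0 with h1 | h1
    · exact h1
    · exfalso; rw [← h1] at hsS; exact absurd hsS.2 (not_le.2 h0)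
  have hneg : ∀ t, 0 ≤ t → t < s → h t < 0 := by
    intro t ht hts
    by_contra hcc
    push_neg at hcc
    have : t ∈ S := ⟨⟨ht, hts.le.trans hst⟩, hcc⟩
    exact absurd (csInf_le hSbdd this) (not_le.2 hts)
  have heqs : h s = 0 := by
    refine le_antisymm ?_ hsS.2
    have htends : Tendsto h (𝓝[<] s) (𝓝 (h s)) :=
      ((hd s hs0).continuousAt).continuousWithinAt.tendsto
    refine le_of_tendsto htends ?_
    filter_upwards [Ioo_mem_nhdsLT hspos] with t ht
    exact (hneg t ht.1.le ht.2).le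
  have hd' : h' s < 0 := hpush s hs0 heqs
  have hslope : Tendsto (slope h s) (𝓝[<] s) (𝓝 (h' s)) :=
    ((hasDerivAt_iff_tendsto_slope.1 (hd s hs0)).mono_left
      (nhdsWithin_mono _ (fun x hx => ne_of_lt hx)))
  have : (0:ℝ) ≤ h' s := by
    refine ge_of_tendsto hslope ?_
    filter_upwards [Ioo_mem_nhdsLT hspos] with t ht
    have h1 : h t < 0 := hneg t ht.1.le ht.2
    rw [slope_def_field, heqs, sub_zero]
    exact le_of_lt (div_pos_of_neg_of_neg h1 (by linarith [ht.2]))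
  linarith

lemma funnel_hasDerivAt (p q μ t : ℝ) :
    HasDerivAt (fun s : ℝ => (p - q) * Real.exp (-μ * s) + q)
      (-(μ * (p - q) * Real.exp (-μ * t))) t := by
  have h := ((((hasDerivAt_id t).const_mul (-μ)).exp).const_mul (p - q)).add_const q
  refine h.congr_deriv ?_
  simp only [id_eq]
  ring

set_option maxHeartbeats 2000000 in
/-- **Glycemic Safety Tube Control (Theorem 1).**
For the Bergman glucose–insulin dynamics with uncertain but bounded patient
parameters, bounded unannounced meal disturbance, and bounded state-estimation
errors, the cascaded GSTC control law `u(t) = ū·Ψ(e_I(t))` (built from the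
glucose safety tube, the remote-insulin funnel and the plasma-insulin funnel)
keeps the glucose within the safe range `[G̲, Ḡ]` and the insulin infusion
within the pump limits `[0, ū]` for all `t ≥ 0`, provided the trajectories
start strictly inside the tubes and the feasibility conditions
FC1a–FC3b hold. -/
theorem glycemic_safety_tube_control
    -- the bounded transformation function Ψ
    (Ψ : ℝ → ℝ)
    (hΨC1 : ContDiff ℝ 1 Ψ)
    (hΨmono : Monotone Ψ)
    (hΨ0 : ∀ s ≤ (0 : ℝ), Ψ s = 0)
    (hΨ1 : ∀ s ≥ (1 : ℝ), Ψ s = 1)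
    (hΨrange : ∀ s, 0 ≤ Ψ s ∧ Ψ s ≤ 1)
    -- patient parameters and their uncertainty bounds
    (S_G SGlow SGbar P2 P2low P2bar P3 P3low P3bar n nlow nbar : ℝ)
    (hSGlow : 0 < SGlow) (hSG : SGlow ≤ S_G ∧ S_G ≤ SGbar)
    (hP2low : 0 < P2low) (hP2 : P2low ≤ P2 ∧ P2 ≤ P2bar)
    (hP3low : 0 < P3low) (hP3 : P3low ≤ P3 ∧ P3 ≤ P3bar)
    (hnlow : 0 < nlow) (hn : nlow ≤ n ∧ n ≤ nbar)
    -- positive constants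
    (V I_b G_b κ₁ κ₂ ubar Δ_X Δ_I Δ'_X Δ'_I M_X M_I Dbar : ℝ)
    (hV : 0 < V) (hIb : 0 < I_b) (hGb : 0 < G_b)
    (hκ₁ : 0 < κ₁) (hκ₂ : 0 < κ₂) (hubar : 0 < ubar)
    (hΔX : 0 < Δ_X) (hΔI : 0 < Δ_I) (hΔ'X : 0 < Δ'_X) (hΔ'I : 0 < Δ'_I)
    (hMX : 0 < M_X) (hMI : 0 < M_I) (hDbar : 0 < Dbar)
    -- funnel parameters
    (p_X q_X μ_X p_I q_I μ_I : ℝ)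
    (hqX : 0 < q_X) (hpX : q_X < p_X) (hμX : 0 < μ_X)
    (hqI : 0 < q_I) (hpI : q_I < p_I) (hμI : 0 < μ_I)
    -- glucose safety bounds
    (Glow Gbar : ℝ) (hGlow : Glow < 0) (hGbar : 0 < Gbar) (hGlGb : 0 < Glow + G_b)
    -- signals
    (G X I Xhat Ihat D Xhat' Ihat' Xref' Iref' : ℝ → ℝ)
    -- definitions of the tube/funnel quantities and the control law
    (eG : ℝ → ℝ)
    (heG : ∀ t, eG t = (G t - (Gbar + Glow) / 2) / ((Gbar - Glow) / 2))
    (Xref : ℝ → ℝ) (hXrefdef : ∀ t, Xref t = κ₁ * Ψ (eG t))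
    (ρX : ℝ → ℝ) (hρXdef : ∀ t, ρX t = (p_X - q_X) * Real.exp (-μ_X * t) + q_X)
    (eX : ℝ → ℝ) (heX : ∀ t, eX t = (Xref t - Xhat t) / ρX t)
    (Iref : ℝ → ℝ) (hIrefdef : ∀ t, Iref t = κ₂ * Ψ (eX t))
    (ρI : ℝ → ℝ) (hρIdef : ∀ t, ρI t = (p_I - q_I) * Real.exp (-μ_I * t) + q_I)
    (eI : ℝ → ℝ) (heI : ∀ t, eI t = (Iref t - Ihat t) / ρI t)
    (u : ℝ → ℝ) (hudef : ∀ t, u t = ubar * Ψ (eI t))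
    -- system dynamics on t ≥ 0
    (hdynG : ∀ t ≥ (0 : ℝ),
        HasDerivAt G (-(S_G * G t) - X t * (G t + G_b) + D t) t)
    (hdynX : ∀ t ≥ (0 : ℝ), HasDerivAt X (-(P2 * X t) + P3 * I t) t)
    (hdynI : ∀ t ≥ (0 : ℝ), HasDerivAt I (-(n * (I t + I_b)) + u t / V) t)
    -- bounded meal disturbance
    (hD : ∀ t ≥ (0 : ℝ), 0 ≤ D t ∧ D t ≤ Dbar)
    -- state estimates: differentiable, with bounded position/derivative errors
    (hXhat : ∀ t ≥ (0 : ℝ), HasDerivAt Xhat (Xhat' t) t)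
    (hIhat : ∀ t ≥ (0 : ℝ), HasDerivAt Ihat (Ihat' t) t)
    (hXerr : ∀ t ≥ (0 : ℝ), |X t - Xhat t| ≤ Δ_X)
    (hIerr : ∀ t ≥ (0 : ℝ), |I t - Ihat t| ≤ Δ_I)
    (hXerr' : ∀ t ≥ (0 : ℝ), |(-(P2 * X t) + P3 * I t) - Xhat' t| ≤ Δ'_X)
    (hIerr' : ∀ t ≥ (0 : ℝ), |(-(n * (I t + I_b)) + u t / V) - Ihat' t| ≤ Δ'_I)
    -- references: differentiable with bounded derivatives
    (hXref' : ∀ t ≥ (0 : ℝ), HasDerivAt Xref (Xref' t) t)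
    (hXrefbnd : ∀ t ≥ (0 : ℝ), |Xref' t| ≤ M_X)
    (hIref' : ∀ t ≥ (0 : ℝ), HasDerivAt Iref (Iref' t) t)
    (hIrefbnd : ∀ t ≥ (0 : ℝ), |Iref' t| ≤ M_I)
    -- initial conditions
    (hinitG : |eG 0| < 1) (hinitX : |eX 0| < 1) (hinitI : |eI 0| < 1)
    -- feasibility conditions
    (hFC1a : (κ₁ - p_X - Δ_X) * (Gbar + G_b) > Dbar)
    (hFC1b : -(SGlow * Glow) > (p_X + Δ_X) * (Glow + G_b))
    (hFC2a : P3low * (κ₂ - p_I - Δ_I) - P2bar * (κ₁ - q_X + Δ_X)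
        > M_X + μ_X * (p_X - q_X) + Δ'_X)
    (hFC2b : P2low * (q_X - Δ_X) - P3bar * (p_I + Δ_I)
        > M_X + μ_X * (p_X - q_X) + Δ'_X)
    (hFC3a : ubar / V - nbar * (κ₂ - q_I + Δ_I + I_b)
        > M_I + μ_I * (p_I - q_I) + Δ'_I)
    (hFC3b : nlow * (q_I - Δ_I + I_b) > M_I + μ_I * (p_I - q_I) + Δ'_I) :
    ∀ t ≥ (0 : ℝ), (Glow ≤ G t ∧ G t ≤ Gbar) ∧ (0 ≤ u t ∧ u t ≤ ubar) := by
  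
  -- basic positivity facts
  have hhalf : (0:ℝ) < (Gbar - Glow) / 2 := by linarith
  have hGbGb : (0:ℝ) < Gbar + G_b := by linarith
  have hpqX : (0:ℝ) < p_X - q_X := by linarith
  have hpqI : (0:ℝ) < p_I - q_I := by linarith
  have hμpqX : (0:ℝ) < μ_X * (p_X - q_X) := mul_pos hμX hpqX
  have hμpqI : (0:ℝ) < μ_I * (p_I - q_I) := mul_pos hμI hpqI
  -- feasibility-derived positivity
  have hk1 : p_X + Δ_X < κ₁ := by
    have h1 : 0 < (κ₁ - p_X - Δ_X) * (Gbar + G_b) := lt_trans hDbar hFC1a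
    rcases mul_pos_iff.1 h1 with ⟨h, _⟩ | ⟨_, h⟩
    · linarith
    · linarith
  have hA0 : (0:ℝ) < κ₁ - q_X + Δ_X := by linarith
  have hP2barpos : (0:ℝ) < P2bar := lt_of_lt_of_le hP2low (hP2.1.trans hP2.2)
  have hP3barpos : (0:ℝ) < P3bar := lt_of_lt_of_le hP3low (hP3.1.trans hP3.2)
  have hC0 : (0:ℝ) < κ₂ - p_I - Δ_I := by
    have h1 : 0 < P3low * (κ₂ - p_I - Δ_I) := by
      have := mul_pos hP2barpos hA0
      linarith
    rcases mul_pos_iff.1 h1 with ⟨_, h⟩ | ⟨h, _⟩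
    · linarith
    · linarith
  have hqXD : Δ_X < q_X := by
    have h1 : 0 < P2low * (q_X - Δ_X) := by
      have := mul_pos hP3barpos (show (0:ℝ) < p_I + Δ_I by linarith)
      linarith
    rcases mul_pos_iff.1 h1 with ⟨_, h⟩ | ⟨h, _⟩
    · linarith
    · linarith
  have hqID : (0:ℝ) < q_I - Δ_I + I_b := by
    have h1 : 0 < nlow * (q_I - Δ_I + I_b) := by linarith
    rcases mul_pos_iff.1 h1 with ⟨_, h⟩ | ⟨h, _⟩
    · linarith
    · linarith
  have hk2 : (0:ℝ) < κ₂ - q_I + Δ_I + I_b := by linarith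
  -- funnel function facts
  have hρIderiv : ∀ t : ℝ, HasDerivAt ρI (-(μ_I * (p_I - q_I) * Real.exp (-μ_I * t))) t := by
    have hfun : ρI = fun s : ℝ => (p_I - q_I) * Real.exp (-μ_I * s) + q_I := funext hρIdef
    intro t; rw [hfun]; exact funnel_hasDerivAt _ _ _ t
  have hρXderiv : ∀ t : ℝ, HasDerivAt ρX (-(μ_X * (p_X - q_X) * Real.exp (-μ_X * t))) t := by
    have hfun : ρX = fun s : ℝ => (p_X - q_X) * Real.exp (-μ_X * s) + q_X := funext hρXdef
    intro t; rw [hfun]; exact funnel_hasDerivAt _ _ _ t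
  have hexpI : ∀ t : ℝ, 0 ≤ t → Real.exp (-μ_I * t) ≤ 1 := by
    intro t ht
    exact Real.exp_le_one_iff.2 (by linarith [mul_nonneg hμI.le ht])
  have hexpX : ∀ t : ℝ, 0 ≤ t → Real.exp (-μ_X * t) ≤ 1 := by
    intro t ht
    exact Real.exp_le_one_iff.2 (by linarith [mul_nonneg hμX.le ht])
  have hρIbnd : ∀ t : ℝ, 0 ≤ t → q_I ≤ ρI t ∧ ρI t ≤ p_I := by
    intro t ht
    rw [hρIdef t]
    constructor
    · have := mul_pos hpqI (Real.exp_pos (-μ_I * t))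
      linarith
    · have := mul_le_mul_of_nonneg_left (hexpI t ht) hpqI.le
      linarith
  have hρXbnd : ∀ t : ℝ, 0 ≤ t → q_X ≤ ρX t ∧ ρX t ≤ p_X := by
    intro t ht
    rw [hρXdef t]
    constructor
    · have := mul_pos hpqX (Real.exp_pos (-μ_X * t))
      linarith
    · have := mul_le_mul_of_nonneg_left (hexpX t ht) hpqX.le
      linarith
  have hρIderbnd : ∀ t : ℝ, 0 ≤ t →
      -(μ_I * (p_I - q_I)) ≤ -(μ_I * (p_I - q_I) * Real.exp (-μ_I * t)) := by
    intro t ht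
    have := mul_le_mul_of_nonneg_left (hexpI t ht) hμpqI.le
    linarith
  have hρXderbnd : ∀ t : ℝ, 0 ≤ t →
      -(μ_X * (p_X - q_X)) ≤ -(μ_X * (p_X - q_X) * Real.exp (-μ_X * t)) := by
    intro t ht
    have := mul_le_mul_of_nonneg_left (hexpX t ht) hμpqX.le
    linarith
  have hρIpos : ∀ t : ℝ, 0 ≤ t → 0 < ρI t := fun t ht => lt_of_lt_of_le hqI (hρIbnd t ht).1
  have hρXpos : ∀ t : ℝ, 0 ≤ t → 0 < ρX t := fun t ht => lt_of_lt_of_le hqX (hρXbnd t ht).1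
  -- reference bounds
  have hIrefbnd0 : ∀ t : ℝ, 0 ≤ Iref t ∧ Iref t ≤ κ₂ := by
    intro t; rw [hIrefdef t]
    obtain ⟨h1, h2⟩ := hΨrange (eX t)
    constructor
    · exact mul_nonneg hκ₂.le h1
    · have := mul_le_mul_of_nonneg_left h2 hκ₂.le
      linarith
  have hXrefbnd0 : ∀ t : ℝ, 0 ≤ Xref t ∧ Xref t ≤ κ₁ := by
    intro t; rw [hXrefdef t]
    obtain ⟨h1, h2⟩ := hΨrange (eG t)
    constructor
    · exact mul_nonneg hκ₁.le h1
    · have := mul_le_mul_of_nonneg_left h2 hκ₁.le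
      linarith
  -- Step 1: plasma-insulin funnel invariance
  have hIup : ∀ t ≥ (0:ℝ), Iref t - Ihat t - ρI t < 0 := by
    refine barrier_lt
      (h' := fun s => Iref' s - Ihat' s - (-(μ_I * (p_I - q_I) * Real.exp (-μ_I * s)))) ?_ ?_ ?_
    · intro t ht
      exact ((hIref' t ht).sub (hIhat t ht)).sub (hρIderiv t)
    · have h1 : |Iref 0 - Ihat 0| < ρI 0 := by
        have := hinitI
        rw [heI 0, abs_div, div_lt_one (abs_pos.2 (hρIpos 0 le_rfl).ne')] at this
        calc |Iref 0 - Ihat 0| < |ρI 0| := this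
        _ = ρI 0 := abs_of_pos (hρIpos 0 le_rfl)
      have := (abs_lt.1 h1).2
      show Iref 0 - Ihat 0 - ρI 0 < 0
      linarith
    · intro t ht heq
      have heq' : Iref t - Ihat t - ρI t = 0 := heq
      have hρpos := hρIpos t ht
      have heIval : eI t = 1 := by
        rw [heI t, show Iref t - Ihat t = ρI t by linarith, div_self hρpos.ne']
      have hut : u t = ubar := by rw [hudef t, heIval, hΨ1 1 le_rfl, mul_one]
      have hIle : I t ≤ Ihat t + Δ_I := by linarith [(abs_le.1 (hIerr t ht)).2]
      have hIhatval : Ihat t = Iref t - ρI t := by linarith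
      have hIBd : I t + I_b ≤ κ₂ - q_I + Δ_I + I_b := by
        have := (hIrefbnd0 t).2
        have := (hρIbnd t ht).1
        linarith
      have hn0 : (0:ℝ) < n := lt_of_lt_of_le hnlow hn.1
      have hnt : n * (I t + I_b) ≤ nbar * (κ₂ - q_I + Δ_I + I_b) := by
        have h1 : n * (I t + I_b) ≤ n * (κ₂ - q_I + Δ_I + I_b) :=
          mul_le_mul_of_nonneg_left hIBd hn0.le
        have h2 : n * (κ₂ - q_I + Δ_I + I_b) ≤ nbar * (κ₂ - q_I + Δ_I + I_b) :=
          mul_le_mul_of_nonneg_right hn.2 hk2.le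
        linarith
      have hder : -(n * (I t + I_b)) + u t / V - Ihat' t ≤ Δ'_I := (abs_le.1 (hIerr' t ht)).2
      rw [hut] at hder
      have hM : Iref' t ≤ M_I := (abs_le.1 (hIrefbnd t ht)).2
      have hexp := hρIderbnd t ht
      show Iref' t - Ihat' t - (-(μ_I * (p_I - q_I) * Real.exp (-μ_I * t))) < 0
      linarith
  have hIlo : ∀ t ≥ (0:ℝ), -(Iref t - Ihat t) - ρI t < 0 := by
    refine barrier_lt
      (h' := fun s => -(Iref' s - Ihat' s) - (-(μ_I * (p_I - q_I) * Real.exp (-μ_I * s)))) ?_ ?_ ?_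
    · intro t ht
      exact (((hIref' t ht).sub (hIhat t ht)).neg).sub (hρIderiv t)
    · have h1 : |Iref 0 - Ihat 0| < ρI 0 := by
        have := hinitI
        rw [heI 0, abs_div, div_lt_one (abs_pos.2 (hρIpos 0 le_rfl).ne')] at this
        calc |Iref 0 - Ihat 0| < |ρI 0| := this
        _ = ρI 0 := abs_of_pos (hρIpos 0 le_rfl)
      have := (abs_lt.1 h1).1
      show -(Iref 0 - Ihat 0) - ρI 0 < 0
      linarith
    · intro t ht heq
      have heq' : -(Iref t - Ihat t) - ρI t = 0 := heq
      have hρpos := hρIpos t ht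
      have heIval : eI t = -1 := by
        rw [heI t, show Iref t - Ihat t = -ρI t by linarith, neg_div, div_self hρpos.ne']
      have hut : u t = 0 := by
        rw [hudef t, heIval, hΨ0 (-1) (by norm_num), mul_zero]
      have hIge : Ihat t - Δ_I ≤ I t := by linarith [(abs_le.1 (hIerr t ht)).1]
      have hIhatval : Ihat t = Iref t + ρI t := by linarith
      have hIBd : q_I - Δ_I + I_b ≤ I t + I_b := by
        have := (hIrefbnd0 t).1
        have := (hρIbnd t ht).1
        linarith
      have hn0 : (0:ℝ) < n := lt_of_lt_of_le hnlow hn.1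
      have hnt : nlow * (q_I - Δ_I + I_b) ≤ n * (I t + I_b) := by
        have h1 : n * (q_I - Δ_I + I_b) ≤ n * (I t + I_b) :=
          mul_le_mul_of_nonneg_left hIBd hn0.le
        have h2 : nlow * (q_I - Δ_I + I_b) ≤ n * (q_I - Δ_I + I_b) :=
          mul_le_mul_of_nonneg_right hn.1 hqID.le
        linarith
      have hder : -Δ'_I ≤ -(n * (I t + I_b)) + u t / V - Ihat' t := (abs_le.1 (hIerr' t ht)).1
      rw [hut, zero_div] at hder
      have hM : -M_I ≤ Iref' t := (abs_le.1 (hIrefbnd t ht)).1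
      have hexp := hρIderbnd t ht
      show -(Iref' t - Ihat' t) - (-(μ_I * (p_I - q_I) * Real.exp (-μ_I * t))) < 0
      linarith
  have hIfun : ∀ t ≥ (0:ℝ), |Iref t - Ihat t| < ρI t := by
    intro t ht
    exact abs_lt.2 ⟨by linarith [hIlo t ht], by linarith [hIup t ht]⟩
  -- Step 2: remote-insulin funnel invariance
  have hXup : ∀ t ≥ (0:ℝ), Xref t - Xhat t - ρX t < 0 := by
    refine barrier_lt
      (h' := fun s => Xref' s - Xhat' s - (-(μ_X * (p_X - q_X) * Real.exp (-μ_X * s)))) ?_ ?_ ?_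
    · intro t ht
      exact ((hXref' t ht).sub (hXhat t ht)).sub (hρXderiv t)
    · have h1 : |Xref 0 - Xhat 0| < ρX 0 := by
        have := hinitX
        rw [heX 0, abs_div, div_lt_one (abs_pos.2 (hρXpos 0 le_rfl).ne')] at this
        calc |Xref 0 - Xhat 0| < |ρX 0| := this
        _ = ρX 0 := abs_of_pos (hρXpos 0 le_rfl)
      have := (abs_lt.1 h1).2
      show Xref 0 - Xhat 0 - ρX 0 < 0
      linarith
    · intro t ht heq
      have heq' : Xref t - Xhat t - ρX t = 0 := heq
      have hρpos := hρXpos t ht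
      have heXval : eX t = 1 := by
        rw [heX t, show Xref t - Xhat t = ρX t by linarith, div_self hρpos.ne']
      have hIrefval : Iref t = κ₂ := by rw [hIrefdef t, heXval, hΨ1 1 le_rfl, mul_one]
      -- lower bound on I
      have hIhatlb : Iref t - ρI t < Ihat t := by linarith [(abs_lt.1 (hIfun t ht)).2]
      have hIge : Ihat t - Δ_I ≤ I t := by linarith [(abs_le.1 (hIerr t ht)).1]
      have hIlb : κ₂ - p_I - Δ_I ≤ I t := by
        have := (hρIbnd t ht).2
        linarith [hIrefval]
      -- upper bound on X
      have hXle : X t ≤ Xhat t + Δ_X := by linarith [(abs_le.1 (hXerr t ht)).2]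
      have hXub : X t ≤ κ₁ - q_X + Δ_X := by
        have := (hXrefbnd0 t).2
        have := (hρXbnd t ht).1
        linarith
      have hP20 : (0:ℝ) < P2 := lt_of_lt_of_le hP2low hP2.1
      have hP30 : (0:ℝ) < P3 := lt_of_lt_of_le hP3low hP3.1
      have hp2x : P2 * X t ≤ P2bar * (κ₁ - q_X + Δ_X) := by
        have h1 : P2 * X t ≤ P2 * (κ₁ - q_X + Δ_X) := mul_le_mul_of_nonneg_left hXub hP20.le
        have h2 : P2 * (κ₁ - q_X + Δ_X) ≤ P2bar * (κ₁ - q_X + Δ_X) :=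
          mul_le_mul_of_nonneg_right hP2.2 hA0.le
        linarith
      have hp3i : P3low * (κ₂ - p_I - Δ_I) ≤ P3 * I t := by
        have h1 : P3 * (κ₂ - p_I - Δ_I) ≤ P3 * I t := mul_le_mul_of_nonneg_left hIlb hP30.le
        have h2 : P3low * (κ₂ - p_I - Δ_I) ≤ P3 * (κ₂ - p_I - Δ_I) :=
          mul_le_mul_of_nonneg_right hP3.1 hC0.le
        linarith
      have hder : -(P2 * X t) + P3 * I t - Xhat' t ≤ Δ'_X := (abs_le.1 (hXerr' t ht)).2
      have hM : Xref' t ≤ M_X := (abs_le.1 (hXrefbnd t ht)).2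
      have hexp := hρXderbnd t ht
      show Xref' t - Xhat' t - (-(μ_X * (p_X - q_X) * Real.exp (-μ_X * t))) < 0
      linarith
  have hXlo : ∀ t ≥ (0:ℝ), -(Xref t - Xhat t) - ρX t < 0 := by
    refine barrier_lt
      (h' := fun s => -(Xref' s - Xhat' s) - (-(μ_X * (p_X - q_X) * Real.exp (-μ_X * s)))) ?_ ?_ ?_
    · intro t ht
      exact (((hXref' t ht).sub (hXhat t ht)).neg).sub (hρXderiv t)
    · have h1 : |Xref 0 - Xhat 0| < ρX 0 := by
        have := hinitX
        rw [heX 0, abs_div, div_lt_one (abs_pos.2 (hρXpos 0 le_rfl).ne')] at this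
        calc |Xref 0 - Xhat 0| < |ρX 0| := this
        _ = ρX 0 := abs_of_pos (hρXpos 0 le_rfl)
      have := (abs_lt.1 h1).1
      show -(Xref 0 - Xhat 0) - ρX 0 < 0
      linarith
    · intro t ht heq
      have heq' : -(Xref t - Xhat t) - ρX t = 0 := heq
      have hρpos := hρXpos t ht
      have heXval : eX t = -1 := by
        rw [heX t, show Xref t - Xhat t = -ρX t by linarith, neg_div, div_self hρpos.ne']
      have hIrefval : Iref t = 0 := by
        rw [hIrefdef t, heXval, hΨ0 (-1) (by norm_num), mul_zero]
      -- upper bound on I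
      have hIhatub : Ihat t < Iref t + ρI t := by linarith [(abs_lt.1 (hIfun t ht)).1]
      have hIle : I t ≤ Ihat t + Δ_I := by linarith [(abs_le.1 (hIerr t ht)).2]
      have hIub : I t ≤ p_I + Δ_I := by
        have := (hρIbnd t ht).2
        linarith [hIrefval]
      -- lower bound on X
      have hXge : Xhat t - Δ_X ≤ X t := by linarith [(abs_le.1 (hXerr t ht)).1]
      have hXlb : q_X - Δ_X ≤ X t := by
        have := (hXrefbnd0 t).1
        have := (hρXbnd t ht).1
        linarith
      have hP20 : (0:ℝ) < P2 := lt_of_lt_of_le hP2low hP2.1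
      have hP30 : (0:ℝ) < P3 := lt_of_lt_of_le hP3low hP3.1
      have hp2x : P2low * (q_X - Δ_X) ≤ P2 * X t := by
        have h1 : P2 * (q_X - Δ_X) ≤ P2 * X t := mul_le_mul_of_nonneg_left hXlb hP20.le
        have h2 : P2low * (q_X - Δ_X) ≤ P2 * (q_X - Δ_X) :=
          mul_le_mul_of_nonneg_right hP2.1 (by linarith)
        linarith
      have hp3i : P3 * I t ≤ P3bar * (p_I + Δ_I) := by
        have h1 : P3 * I t ≤ P3 * (p_I + Δ_I) := mul_le_mul_of_nonneg_left hIub hP30.le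
        have h2 : P3 * (p_I + Δ_I) ≤ P3bar * (p_I + Δ_I) :=
          mul_le_mul_of_nonneg_right hP3.2 (by linarith)
        linarith
      have hder : -Δ'_X ≤ -(P2 * X t) + P3 * I t - Xhat' t := (abs_le.1 (hXerr' t ht)).1
      have hM : -M_X ≤ Xref' t := (abs_le.1 (hXrefbnd t ht)).1
      have hexp := hρXderbnd t ht
      show -(Xref' t - Xhat' t) - (-(μ_X * (p_X - q_X) * Real.exp (-μ_X * t))) < 0
      linarith
  have hXfun : ∀ t ≥ (0:ℝ), |Xref t - Xhat t| < ρX t := by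
    intro t ht
    exact abs_lt.2 ⟨by linarith [hXlo t ht], by linarith [hXup t ht]⟩
  -- Step 3: glucose safety tube
  have hG0 : Glow < G 0 ∧ G 0 < Gbar := by
    have := hinitG
    rw [heG 0, abs_div, div_lt_one (abs_pos.2 hhalf.ne')] at this
    rw [abs_of_pos hhalf] at this
    obtain ⟨h1, h2⟩ := abs_lt.1 this
    constructor <;> linarith
  have hGup : ∀ t ≥ (0:ℝ), G t - Gbar < 0 := by
    refine barrier_lt (h' := fun s => -(S_G * G s) - X s * (G s + G_b) + D s) ?_ ?_ ?_
    · intro t ht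
      exact (hdynG t ht).sub_const Gbar
    · show G 0 - Gbar < 0
      linarith [hG0.2]
    · intro t ht heq
      have heq' : G t - Gbar = 0 := heq
      have hGt : G t = Gbar := by linarith
      have heGval : eG t = 1 := by
        rw [heG t, hGt, div_eq_iff hhalf.ne']
        ring
      have hXrefval : Xref t = κ₁ := by rw [hXrefdef t, heGval, hΨ1 1 le_rfl, mul_one]
      have hXhatlb : Xref t - ρX t < Xhat t := by linarith [(abs_lt.1 (hXfun t ht)).2]
      have hXge : Xhat t - Δ_X ≤ X t := by linarith [(abs_le.1 (hXerr t ht)).1]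
      have hXlb : κ₁ - p_X - Δ_X ≤ X t := by
        have := (hρXbnd t ht).2
        linarith [hXrefval]
      have hSGG : SGlow * Gbar ≤ S_G * Gbar := mul_le_mul_of_nonneg_right hSG.1 hGbar.le
      have hXG : (κ₁ - p_X - Δ_X) * (Gbar + G_b) ≤ X t * (Gbar + G_b) :=
        mul_le_mul_of_nonneg_right hXlb hGbGb.le
      have hDt := (hD t ht).2
      show -(S_G * G t) - X t * (G t + G_b) + D t < 0
      rw [hGt]
      linarith [mul_pos hSGlow hGbar]
  have hGlo : ∀ t ≥ (0:ℝ), Glow - G t < 0 := by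
    refine barrier_lt (h' := fun s => -(-(S_G * G s) - X s * (G s + G_b) + D s)) ?_ ?_ ?_
    · intro t ht
      exact HasDerivAt.const_sub Glow (hdynG t ht)
    · show Glow - G 0 < 0
      linarith [hG0.1]
    · intro t ht heq
      have heq' : Glow - G t = 0 := heq
      have hGt : G t = Glow := by linarith
      have heGval : eG t = -1 := by
        rw [heG t, hGt, div_eq_iff hhalf.ne']
        ring
      have hXrefval : Xref t = 0 := by
        rw [hXrefdef t, heGval, hΨ0 (-1) (by norm_num), mul_zero]
      have hXhatub : Xhat t < Xref t + ρX t := by linarith [(abs_lt.1 (hXfun t ht)).1]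
      have hXle : X t ≤ Xhat t + Δ_X := by linarith [(abs_le.1 (hXerr t ht)).2]
      have hXub : X t ≤ p_X + Δ_X := by
        have := (hρXbnd t ht).2
        linarith [hXrefval]
      have hSGG : S_G * Glow ≤ SGlow * Glow := mul_le_mul_of_nonpos_right hSG.1 hGlow.le
      have hXG : X t * (Glow + G_b) ≤ (p_X + Δ_X) * (Glow + G_b) :=
        mul_le_mul_of_nonneg_right hXub hGlGb.le
      have hDt := (hD t ht).1
      show -(-(S_G * G t) - X t * (G t + G_b) + D t) < 0
      rw [hGt]
      linarith
  -- conclusion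
  intro t ht
  refine ⟨⟨by linarith [hGlo t ht], by linarith [hGup t ht]⟩, ?_, ?_⟩
  · rw [hudef t]
    exact mul_nonneg hubar.le (hΨrange (eI t)).1
  · rw [hudef t]
    have := mul_le_mul_of_nonneg_left (hΨrange (eI t)).2 hubar.le
    linarith
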